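/- Characterization of the localization equivalence via pseudo-Ore conditions: for triples (a,C,x^t) and (b,D,y^t) (with C ∈ Σ_n, D ∈ Σ_m), the following are equivalent: (1) (a,C,x^t) ∼ (b,D,y^t); (2) there exist u ∈ R^k, E,F ∈ Σ_k, z ∈ X^k (same size k) such that (a,C,x^t)+(0,E,z^t) ≥ (b,D,y^t)+(u,F,0^t); (3) there exist triples (a₁,C₁,x₁^t) and (b₁,D₁,y₁^t) with (a,C,x^t) ≤ (a₁,C₁,x₁^t), (a₁,C₁,x₁^t) ≥ (b₁,D₁,y₁^t), and (b₁,D₁,y₁^t) ≤ (b,D,y^t). -/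

import Mathlib

set_option linter.unusedSectionVars false
set_option maxHeartbeats 1000000


open Matrix

variable {R X : Type*}

/-- Action of a matrix over `R` on a column of module elements. -/
def mulVecX [Ring R] [AddCommGroup X] [Module R X] {m n : ℕ}
    (A : Matrix (Fin m) (Fin n) R) (x : Fin n → X) : Fin m → X :=
  fun i => ∑ j, A i j • x j

/-- An ordered triple `(a, C, xᵗ)` with `a ∈ Rⁿ`, `C` an `n × n` matrix, `x ∈ Xⁿ`. -/
structure Triple (R X : Type*) [Ring R] [AddCommGroup X] [Module R X] where
  n : ℕ
  a : Fin n → R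
  C : Matrix (Fin n) (Fin n) R
  x : Fin n → X

namespace Triple

variable [Ring R] [AddCommGroup X] [Module R X]

/-- Block sum of ordered triples: `([a b], diag(C,D), [xᵗ; yᵗ])`. -/
def add (t s : Triple R X) : Triple R X where
  n := t.n + s.n
  a := Fin.append t.a s.a
  C := (Matrix.fromBlocks t.C 0 0 s.C).submatrix
        (finSumFinEquiv (m := t.n) (n := s.n)).symm finSumFinEquiv.symm
  x := Fin.append t.x s.x

/-- The congruence relation `≡`: same size, witnessed by invertible matrices `U₁, U₂`
with `a = b U₁`, `yᵗ = U₂ xᵗ` and `C₂ U₁ = U₂ C₁`. -/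
def Cong (t s : Triple R X) : Prop :=
  ∃ (h : t.n = s.n) (U₁ U₂ : Matrix (Fin t.n) (Fin t.n) R),
    IsUnit U₁ ∧ IsUnit U₂ ∧
    t.a = (fun j => s.a (Fin.cast h j)) ᵥ* U₁ ∧
    (fun i => s.x (Fin.cast h i)) = mulVecX U₂ t.x ∧
    s.C.submatrix (Fin.cast h) (Fin.cast h) * U₁ = U₂ * t.C

/-- The relation `(a,C₁,xᵗ) ≥ (b,C₂,yᵗ)`: there are matrices `A₁, A₂` with
`a = b A₁`, `yᵗ = A₂ xᵗ` and `C₂ A₁ = A₂ C₁`. -/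
def Ge (t s : Triple R X) : Prop :=
  ∃ A₁ A₂ : Matrix (Fin s.n) (Fin t.n) R,
    t.a = s.a ᵥ* A₁ ∧ s.x = mulVecX A₂ t.x ∧ s.C * A₁ = A₂ * t.C

/-- The relation `(a,C₁,xᵗ) ≤ (b,C₂,yᵗ)`: there are matrices `A₁, A₂` with
`xᵗ = A₁ yᵗ`, `b = a A₂` and `C₁ A₂ = A₁ C₂`. -/
def Le (t s : Triple R X) : Prop :=
  ∃ A₁ A₂ : Matrix (Fin t.n) (Fin s.n) R,
    t.x = mulVecX A₁ s.x ∧ s.a = t.a ᵥ* A₂ ∧ t.C * A₂ = A₁ * s.C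

end Triple

/-- A size-indexed collection of square matrices over `R`. -/
def MatSet (R : Type*) [Ring R] := ∀ n : ℕ, Set (Matrix (Fin n) (Fin n) R)

/-- `S` is a multiplicative set of matrices: it contains all permutation matrices,
is closed under products, and closed under block upper triangular combinations. -/
def IsMatMultSet [Ring R] (S : MatSet R) : Prop :=
  (∀ (n : ℕ) (σ : Equiv.Perm (Fin n)), σ.permMatrix R ∈ S n) ∧
  (∀ (n : ℕ) (C D : Matrix (Fin n) (Fin n) R), C ∈ S n → D ∈ S n → C * D ∈ S n) ∧
  (∀ (n m : ℕ) (C : Matrix (Fin n) (Fin n) R) (D : Matrix (Fin m) (Fin m) R)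
      (A : Matrix (Fin n) (Fin m) R), C ∈ S n → D ∈ S m →
    (Matrix.fromBlocks C A 0 D).submatrix finSumFinEquiv.symm finSumFinEquiv.symm ∈ S (n + m))

/-- The trivial triples `Σ⁻¹X₀`: finite sums of triples `(0,C,xᵗ)` and `(b,D,0ᵗ)` with
`C, D ∈ Σ`. -/
inductive IsTrivial [Ring R] [AddCommGroup X] [Module R X] (S : MatSet R) :
    Triple R X → Prop
  | zeroA (n : ℕ) (C : Matrix (Fin n) (Fin n) R) (x : Fin n → X) (hC : C ∈ S n) :
      IsTrivial S ⟨n, 0, C, x⟩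
  | zeroX (n : ℕ) (b : Fin n → R) (C : Matrix (Fin n) (Fin n) R) (hC : C ∈ S n) :
      IsTrivial S ⟨n, b, C, 0⟩
  | add {t s : Triple R X} : IsTrivial S t → IsTrivial S s → IsTrivial S (t.add s)

/-- The relation `∼`: triples become congruent after adding trivial triples. -/
def Sim [Ring R] [AddCommGroup X] [Module R X] (S : MatSet R) (t s : Triple R X) : Prop :=
  ∃ z₁ z₂ : Triple R X, IsTrivial S z₁ ∧ IsTrivial S z₂ ∧ (t.add z₁).Cong (s.add z₂)
/-! ### Infrastructure -/

section Infra
variable [Ring R] [AddCommGroup X] [Module R X]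

lemma mulVecX_one {n : ℕ} (x : Fin n → X) : mulVecX (1 : Matrix (Fin n) (Fin n) R) x = x := by
  funext i
  simp [mulVecX, Matrix.one_apply, ite_smul]

lemma mulVecX_mulVecX {m n p : ℕ} (A : Matrix (Fin m) (Fin n) R) (B : Matrix (Fin n) (Fin p) R)
    (x : Fin p → X) : mulVecX (A * B) x = mulVecX A (mulVecX B x) := by
  funext i
  simp only [mulVecX, Matrix.mul_apply, Finset.sum_smul, Finset.smul_sum, smul_smul]
  rw [Finset.sum_comm]

lemma mulVecX_zero {m n : ℕ} (A : Matrix (Fin m) (Fin n) R) :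
    mulVecX A (0 : Fin n → X) = 0 := by
  funext i; simp [mulVecX]

lemma zero_mulVecX {m n : ℕ} (x : Fin n → X) :
    mulVecX (0 : Matrix (Fin m) (Fin n) R) x = 0 := by
  funext i; simp [mulVecX]

lemma isUnit_of_mul_both {n : ℕ} {M N : Matrix (Fin n) (Fin n) R}
    (h1 : M * N = 1) (h2 : N * M = 1) : IsUnit M := ⟨⟨M, N, h1, h2⟩, rfl⟩

lemma permMatrix_isUnit {n : ℕ} (e : Equiv.Perm (Fin n)) :
    IsUnit (e.permMatrix R) := by
  refine ⟨⟨e.permMatrix R, Equiv.Perm.permMatrix R e.symm, ?_, ?_⟩, rfl⟩ <;>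
  · show (Equiv.toPEquiv _).toMatrix * (Equiv.toPEquiv _).toMatrix = _
    rw [← PEquiv.toMatrix_trans, ← Equiv.toPEquiv_trans]
    simp

lemma permMatrix_apply {n : ℕ} (e : Equiv.Perm (Fin n)) (i j : Fin n) :
    (e.permMatrix R) i j = if e i = j then 1 else 0 := by
  simp [Equiv.Perm.permMatrix, PEquiv.toMatrix, Equiv.toPEquiv, Option.mem_def]

lemma permMatrix_refl {n : ℕ} :
    (Equiv.Perm.permMatrix R (Equiv.refl (Fin n))) = 1 := by
  simp [Equiv.Perm.permMatrix]

namespace Triple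

@[simp] lemma add_n (t s : Triple R X) : (t.add s).n = t.n + s.n := rfl

@[simp] lemma add_a_castAdd (t s : Triple R X) (i : Fin t.n) :
    (t.add s).a (Fin.castAdd s.n i) = t.a i := Fin.append_left _ _ _
@[simp] lemma add_a_natAdd (t s : Triple R X) (i : Fin s.n) :
    (t.add s).a (Fin.natAdd t.n i) = s.a i := Fin.append_right _ _ _
@[simp] lemma add_x_castAdd (t s : Triple R X) (i : Fin t.n) :
    (t.add s).x (Fin.castAdd s.n i) = t.x i := Fin.append_left _ _ _
@[simp] lemma add_x_natAdd (t s : Triple R X) (i : Fin s.n) :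
    (t.add s).x (Fin.natAdd t.n i) = s.x i := Fin.append_right _ _ _
@[simp] lemma add_C_cc (t s : Triple R X) (i j : Fin t.n) :
    (t.add s).C (Fin.castAdd s.n i) (Fin.castAdd s.n j) = t.C i j := by
  simp [Triple.add]
@[simp] lemma add_C_cn (t s : Triple R X) (i : Fin t.n) (j : Fin s.n) :
    (t.add s).C (Fin.castAdd s.n i) (Fin.natAdd t.n j) = 0 := by
  simp [Triple.add]
@[simp] lemma add_C_nc (t s : Triple R X) (i : Fin s.n) (j : Fin t.n) :
    (t.add s).C (Fin.natAdd t.n i) (Fin.castAdd s.n j) = 0 := by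
  simp [Triple.add]
@[simp] lemma add_C_nn (t s : Triple R X) (i j : Fin s.n) :
    (t.add s).C (Fin.natAdd t.n i) (Fin.natAdd t.n j) = s.C i j := by
  simp [Triple.add]

end Triple

end Infra
section Infra2
variable [Ring R] [AddCommGroup X] [Module R X]

@[simp] lemma submatrix_cast_self {n : ℕ} (h h' : n = n) (M : Matrix (Fin n) (Fin n) R) :
    M.submatrix (Fin.cast h) (Fin.cast h') = M := by
  ext i j; simp [Matrix.submatrix_apply]

namespace Triple

lemma cong_refl (t : Triple R X) : t.Cong t := by
  refine ⟨rfl, 1, 1, isUnit_one, isUnit_one, ?_, ?_, by simp⟩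
  · simp [Matrix.vecMul_one]
  · simp [mulVecX_one]

lemma cong_of_equiv {t s : Triple R X} (e : Fin t.n ≃ Fin s.n)
    (ha : ∀ i, t.a i = s.a (e i)) (hx0 : ∀ i, t.x i = s.x (e i))
    (hC0 : ∀ i j, t.C i j = s.C (e i) (e j)) : t.Cong s := by
  have hx : ∀ i, s.x i = t.x (e.symm i) := fun i => by
    rw [hx0 (e.symm i), Equiv.apply_symm_apply]
  have hC : ∀ i j, s.C i j = t.C (e.symm i) (e.symm j) := fun i j => by
    rw [hC0 (e.symm i) (e.symm j), Equiv.apply_symm_apply, Equiv.apply_symm_apply]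
  obtain ⟨n, a, C, x⟩ := t
  obtain ⟨m, b, D, y⟩ := s
  have h : n = m := Fin.equiv_iff_eq.mp ⟨e⟩
  subst h
  simp only at e ha hx hC ⊢
  refine ⟨rfl, Equiv.Perm.permMatrix R e.symm, Equiv.Perm.permMatrix R e.symm,
    permMatrix_isUnit _, permMatrix_isUnit _, ?_, ?_, ?_⟩
  · funext j
    simp only [Matrix.vecMul, dotProduct, permMatrix_apply, Fin.cast_eq_self]
    rw [Finset.sum_eq_single (e j)]
    · simp [ha]
    · intro i _ hne
      simp [show ¬ (e.symm i = j) from fun h => hne (by simpa using congrArg e h)]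
    · simp
  · funext i
    simp only [mulVecX, permMatrix_apply, ite_smul, one_smul, zero_smul, Fin.cast_eq_self]
    rw [Finset.sum_eq_single (e.symm i)]
    · simp [hx]
    · intro j _ hne; simp [Ne.symm hne]
    · simp
  · ext i j
    simp only [Matrix.mul_apply, Matrix.submatrix_apply, Fin.cast_eq_self, permMatrix_apply]
    rw [Finset.sum_eq_single (e j), Finset.sum_eq_single (e.symm i)]
    · simp [hC]
    · intro k _ hne; simp [Ne.symm hne]
    · simp
    · intro k _ hne
      simp [show ¬ (e.symm k = j) from fun h => hne (by simpa using congrArg e h)]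
    · simp

lemma cong_symm {t s : Triple R X} (h : t.Cong s) : s.Cong t := by
  obtain ⟨n, a, C, x⟩ := t
  obtain ⟨m, b, D, y⟩ := s
  obtain ⟨h, U₁, U₂, hU₁, hU₂, ha, hx, hC⟩ := h
  simp only at h; subst h
  simp only [Fin.cast_eq_self, submatrix_cast_self] at ha hx hC
  obtain ⟨u₁, rfl⟩ := hU₁
  obtain ⟨u₂, rfl⟩ := hU₂
  have ha : a = b ᵥ* u₁.val := ha
  have hx : y = mulVecX u₂.val x := hx
  have hC : D * u₁.val = u₂.val * C := hC
  have hgoal1 : b = a ᵥ* u₁.inv := by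
    rw [ha, Matrix.vecMul_vecMul, u₁.val_inv, Matrix.vecMul_one]
  have hgoal2 : x = mulVecX u₂.inv y := by
    rw [hx, ← mulVecX_mulVecX, u₂.inv_val, mulVecX_one]
  have hgoal3 : C * u₁.inv = u₂.inv * D := by
    have h1 : u₂.inv * (u₂.val * C) * u₁.inv = u₂.inv * (D * u₁.val) * u₁.inv := by rw [hC]
    rw [← mul_assoc, ← mul_assoc, u₂.inv_val, one_mul] at h1
    rw [h1, mul_assoc, mul_assoc, u₁.val_inv, mul_one]
  exact ⟨rfl, u₁.inv, u₂.inv, (u₁⁻¹).isUnit, (u₂⁻¹).isUnit, hgoal1, hgoal2, by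
    rw [submatrix_cast_self]; exact hgoal3⟩

lemma cong_trans {t s r : Triple R X} (h1 : t.Cong s) (h2 : s.Cong r) : t.Cong r := by
  obtain ⟨n, a, C, x⟩ := t
  obtain ⟨m, b, D, y⟩ := s
  obtain ⟨p, c, E, z⟩ := r
  obtain ⟨h, U₁, U₂, hU₁, hU₂, ha, hx, hC⟩ := h1
  obtain ⟨h', V₁, V₂, hV₁, hV₂, ha', hx', hC'⟩ := h2
  simp only at h h'; subst h; subst h'
  simp only [Fin.cast_eq_self, submatrix_cast_self] at ha hx hC ha' hx' hC'
  simp only at U₁ U₂ V₁ V₂ hU₁ hU₂ hV₁ hV₂ ha hx hC ha' hx' hC'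
  have ha : a = b ᵥ* (U₁ : Matrix (Fin n) (Fin n) R) := ha
  have hx : y = mulVecX (U₂ : Matrix (Fin n) (Fin n) R) x := hx
  have ha' : b = c ᵥ* (V₁ : Matrix (Fin n) (Fin n) R) := ha'
  have hx' : z = mulVecX (V₂ : Matrix (Fin n) (Fin n) R) y := hx'
  refine ⟨rfl, V₁ * U₁, V₂ * U₂, hV₁.mul hU₁, hV₂.mul hU₂, ?_, ?_, ?_⟩
  · show a = c ᵥ* _
    rw [ha, ha', Matrix.vecMul_vecMul]
  · show z = _
    rw [hx', hx, mulVecX_mulVecX]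
  · show E.submatrix _ _ * _ = _
    rw [submatrix_cast_self, ← mul_assoc, hC', mul_assoc, hC, ← mul_assoc]

end Triple
end Infra2
section Infra3
variable [Ring R] [AddCommGroup X] [Module R X]

/-- Horizontal concatenation of matrices. -/
def hcat {p q r : ℕ} (A : Matrix (Fin p) (Fin q) R) (B : Matrix (Fin p) (Fin r) R) :
    Matrix (Fin p) (Fin (q + r)) R := fun i => Fin.append (A i) (B i)

/-- Vertical concatenation of matrices. -/
def vcat {p q r : ℕ} (A : Matrix (Fin p) (Fin r) R) (B : Matrix (Fin q) (Fin r) R) :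
    Matrix (Fin (p + q)) (Fin r) R := fun i j => Fin.append (fun l => A l j) (fun l => B l j) i

/-- Block 2×2 matrix. -/
def blk {p q r s : ℕ} (A : Matrix (Fin p) (Fin r) R) (B : Matrix (Fin p) (Fin s) R)
    (C : Matrix (Fin q) (Fin r) R) (D : Matrix (Fin q) (Fin s) R) :
    Matrix (Fin (p + q)) (Fin (r + s)) R := vcat (hcat A B) (hcat C D)

@[simp] lemma hcat_castAdd {p q r : ℕ} (A : Matrix (Fin p) (Fin q) R)
    (B : Matrix (Fin p) (Fin r) R) (i : Fin p) (j : Fin q) :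
    hcat A B i (Fin.castAdd r j) = A i j := Fin.append_left _ _ _
@[simp] lemma hcat_natAdd {p q r : ℕ} (A : Matrix (Fin p) (Fin q) R)
    (B : Matrix (Fin p) (Fin r) R) (i : Fin p) (j : Fin r) :
    hcat A B i (Fin.natAdd q j) = B i j := Fin.append_right _ _ _
@[simp] lemma vcat_castAdd {p q r : ℕ} (A : Matrix (Fin p) (Fin r) R)
    (B : Matrix (Fin q) (Fin r) R) (i : Fin p) (j : Fin r) :
    vcat A B (Fin.castAdd q i) j = A i j := by
  show Fin.append _ _ _ = _; rw [Fin.append_left]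
@[simp] lemma vcat_natAdd {p q r : ℕ} (A : Matrix (Fin p) (Fin r) R)
    (B : Matrix (Fin q) (Fin r) R) (i : Fin q) (j : Fin r) :
    vcat A B (Fin.natAdd p i) j = B i j := by
  show Fin.append _ _ _ = _; rw [Fin.append_right]

@[simp] lemma blk_cc {p q r s : ℕ} (A : Matrix (Fin p) (Fin r) R) (B : Matrix (Fin p) (Fin s) R)
    (C : Matrix (Fin q) (Fin r) R) (D : Matrix (Fin q) (Fin s) R) (i : Fin p) (j : Fin r) :
    blk A B C D (Fin.castAdd q i) (Fin.castAdd s j) = A i j := by simp [blk]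
@[simp] lemma blk_cn {p q r s : ℕ} (A : Matrix (Fin p) (Fin r) R) (B : Matrix (Fin p) (Fin s) R)
    (C : Matrix (Fin q) (Fin r) R) (D : Matrix (Fin q) (Fin s) R) (i : Fin p) (j : Fin s) :
    blk A B C D (Fin.castAdd q i) (Fin.natAdd r j) = B i j := by simp [blk]
@[simp] lemma blk_nc {p q r s : ℕ} (A : Matrix (Fin p) (Fin r) R) (B : Matrix (Fin p) (Fin s) R)
    (C : Matrix (Fin q) (Fin r) R) (D : Matrix (Fin q) (Fin s) R) (i : Fin q) (j : Fin r) :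
    blk A B C D (Fin.natAdd p i) (Fin.castAdd s j) = C i j := by simp [blk]
@[simp] lemma blk_nn {p q r s : ℕ} (A : Matrix (Fin p) (Fin r) R) (B : Matrix (Fin p) (Fin s) R)
    (C : Matrix (Fin q) (Fin r) R) (D : Matrix (Fin q) (Fin s) R) (i : Fin q) (j : Fin s) :
    blk A B C D (Fin.natAdd p i) (Fin.natAdd r j) = D i j := by simp [blk]

lemma Triple.add_C_eq (t s : Triple R X) : (t.add s).C = blk t.C 0 0 s.C := by
  ext i j
  refine Fin.addCases (fun i' => ?_) (fun i' => ?_) i <;>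
    refine Fin.addCases (fun j' => ?_) (fun j' => ?_) j <;> simp

lemma blk_one {p q : ℕ} : blk (1 : Matrix (Fin p) (Fin p) R) 0 0 (1 : Matrix (Fin q) (Fin q) R)
    = 1 := by
  ext i j
  refine Fin.addCases (fun i' => ?_) (fun i' => ?_) i <;>
    refine Fin.addCases (fun j' => ?_) (fun j' => ?_) j
  · simp only [blk_cc]
    rw [Matrix.one_apply, Matrix.one_apply]
    simp [Fin.ext_iff]
  · simp only [blk_cn, Matrix.zero_apply]
    rw [Matrix.one_apply_ne (by simp [Fin.ext_iff]; have := i'.isLt; omega)]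
  · simp only [blk_nc, Matrix.zero_apply]
    rw [Matrix.one_apply_ne (by simp [Fin.ext_iff]; have := j'.isLt; omega)]
  · simp only [blk_nn]
    rw [Matrix.one_apply, Matrix.one_apply]
    simp [Fin.ext_iff]

-- multiplication lemmas
lemma vecMul_hcat {p q r : ℕ} (a : Fin p → R) (A : Matrix (Fin p) (Fin q) R)
    (B : Matrix (Fin p) (Fin r) R) :
    a ᵥ* hcat A B = Fin.append (a ᵥ* A) (a ᵥ* B) := by
  funext j
  refine Fin.addCases (fun j' => ?_) (fun j' => ?_) j <;>
    simp [Matrix.vecMul, dotProduct]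

lemma vecMul_append_vcat {p q r : ℕ} (a : Fin p → R) (b : Fin q → R)
    (A : Matrix (Fin p) (Fin r) R) (B : Matrix (Fin q) (Fin r) R) :
    (Fin.append a b) ᵥ* vcat A B = a ᵥ* A + b ᵥ* B := by
  funext j
  simp [Matrix.vecMul, dotProduct, Fin.sum_univ_add]

lemma mulVecX_vcat {p q r : ℕ} (A : Matrix (Fin p) (Fin r) R) (B : Matrix (Fin q) (Fin r) R)
    (x : Fin r → X) :
    mulVecX (vcat A B) x = Fin.append (mulVecX A x) (mulVecX B x) := by
  funext i
  refine Fin.addCases (fun i' => ?_) (fun i' => ?_) i <;> simp [mulVecX]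

lemma mulVecX_hcat_append {p q r : ℕ} (A : Matrix (Fin p) (Fin q) R)
    (B : Matrix (Fin p) (Fin r) R) (x : Fin q → X) (y : Fin r → X) :
    mulVecX (hcat A B) (Fin.append x y) = mulVecX A x + mulVecX B y := by
  funext i
  simp [mulVecX, Fin.sum_univ_add]

lemma mul_hcat {p q r s : ℕ} (M : Matrix (Fin p) (Fin q) R) (A : Matrix (Fin q) (Fin r) R)
    (B : Matrix (Fin q) (Fin s) R) : M * hcat A B = hcat (M * A) (M * B) := by
  ext i j
  refine Fin.addCases (fun j' => ?_) (fun j' => ?_) j <;> simp [Matrix.mul_apply]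

lemma vcat_mul {p q r s : ℕ} (A : Matrix (Fin p) (Fin r) R) (B : Matrix (Fin q) (Fin r) R)
    (M : Matrix (Fin r) (Fin s) R) : vcat A B * M = vcat (A * M) (B * M) := by
  ext i j
  refine Fin.addCases (fun i' => ?_) (fun i' => ?_) i <;> simp [Matrix.mul_apply]

lemma hcat_mul_vcat {p q r s : ℕ} (A : Matrix (Fin p) (Fin q) R) (B : Matrix (Fin p) (Fin r) R)
    (A' : Matrix (Fin q) (Fin s) R) (B' : Matrix (Fin r) (Fin s) R) :
    hcat A B * vcat A' B' = A * A' + B * B' := by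
  ext i j
  simp [Matrix.mul_apply, Fin.sum_univ_add]

lemma hcat_mul_blk {p q r s u : ℕ} (A : Matrix (Fin p) (Fin q) R) (B : Matrix (Fin p) (Fin r) R)
    (P : Matrix (Fin q) (Fin s) R) (Q : Matrix (Fin q) (Fin u) R)
    (P' : Matrix (Fin r) (Fin s) R) (Q' : Matrix (Fin r) (Fin u) R) :
    hcat A B * blk P Q P' Q' = hcat (A * P + B * P') (A * Q + B * Q') := by
  rw [blk, hcat_mul_vcat, mul_hcat, mul_hcat]
  ext i j
  refine Fin.addCases (fun j' => ?_) (fun j' => ?_) j <;> simp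

lemma blk_mul_vcat {p q r s u : ℕ} (P : Matrix (Fin p) (Fin r) R) (Q : Matrix (Fin p) (Fin s) R)
    (P' : Matrix (Fin q) (Fin r) R) (Q' : Matrix (Fin q) (Fin s) R)
    (A : Matrix (Fin r) (Fin u) R) (B : Matrix (Fin s) (Fin u) R) :
    blk P Q P' Q' * vcat A B = vcat (P * A + Q * B) (P' * A + Q' * B) := by
  rw [blk, vcat_mul, hcat_mul_vcat, hcat_mul_vcat]

lemma blk_mul_blk {p q r s p' q' : ℕ}
    (A : Matrix (Fin p) (Fin r) R) (B : Matrix (Fin p) (Fin s) R)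
    (C : Matrix (Fin q) (Fin r) R) (D : Matrix (Fin q) (Fin s) R)
    (A' : Matrix (Fin r) (Fin p') R) (B' : Matrix (Fin r) (Fin q') R)
    (C' : Matrix (Fin s) (Fin p') R) (D' : Matrix (Fin s) (Fin q') R) :
    blk A B C D * blk A' B' C' D'
      = blk (A * A' + B * C') (A * B' + B * D') (C * A' + D * C') (C * B' + D * D') := by
  ext i j
  refine Fin.addCases (fun i' => ?_) (fun i' => ?_) i <;>
    refine Fin.addCases (fun j' => ?_) (fun j' => ?_) j <;>
      simp [Matrix.mul_apply, Fin.sum_univ_add, Matrix.add_apply]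

lemma blk_isUnit {p q : ℕ} {U : Matrix (Fin p) (Fin p) R} {V : Matrix (Fin q) (Fin q) R}
    (hU : IsUnit U) (hV : IsUnit V) : IsUnit (blk U 0 0 V) := by
  obtain ⟨u, rfl⟩ := hU
  obtain ⟨v, rfl⟩ := hV
  refine isUnit_of_mul_both (N := blk u.inv 0 0 v.inv) ?_ ?_ <;>
    rw [blk_mul_blk] <;>
    simp only [Matrix.mul_zero, Matrix.zero_mul, add_zero, zero_add, u.val_inv, u.inv_val,
      v.val_inv, v.inv_val, blk_one]

/-- An invertible upper block triangular matrix with identity diagonal. -/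
lemma blk_triu_isUnit {p q : ℕ} (B : Matrix (Fin p) (Fin q) R) :
    IsUnit (blk (1 : Matrix (Fin p) (Fin p) R) B 0 (1 : Matrix (Fin q) (Fin q) R)) := by
  refine isUnit_of_mul_both (N := blk 1 (-B) 0 1) ?_ ?_ <;>
    rw [blk_mul_blk] <;>
    simp [blk_one]

lemma blk_tril_isUnit {p q : ℕ} (B : Matrix (Fin q) (Fin p) R) :
    IsUnit (blk (1 : Matrix (Fin p) (Fin p) R) 0 B (1 : Matrix (Fin q) (Fin q) R)) := by
  refine isUnit_of_mul_both (N := blk 1 0 (-B) 1) ?_ ?_ <;>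
    rw [blk_mul_blk] <;>
    simp [blk_one]

lemma append_zero_zero {p q : ℕ} {M : Type*} [AddCommMonoid M] :
    Fin.append (0 : Fin p → M) (0 : Fin q → M) = 0 := by
  funext i
  refine Fin.addCases (fun i' => ?_) (fun i' => ?_) i <;> simp

end Infra3
section Infra4
variable [Ring R] [AddCommGroup X] [Module R X]

lemma append_add {p q : ℕ} {M : Type*} [AddCommMonoid M] (u u' : Fin p → M) (v v' : Fin q → M) :
    Fin.append u v + Fin.append u' v' = Fin.append (u + u') (v + v') := by
  funext i
  refine Fin.addCases (fun i' => ?_) (fun i' => ?_) i <;> simp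

lemma vecMul_append_blk {p q r s : ℕ} (a : Fin p → R) (b : Fin q → R)
    (A : Matrix (Fin p) (Fin r) R) (B : Matrix (Fin p) (Fin s) R)
    (C : Matrix (Fin q) (Fin r) R) (D : Matrix (Fin q) (Fin s) R) :
    (Fin.append a b) ᵥ* blk A B C D = Fin.append (a ᵥ* A + b ᵥ* C) (a ᵥ* B + b ᵥ* D) := by
  rw [blk, vecMul_append_vcat, vecMul_hcat, vecMul_hcat, append_add]

lemma mulVecX_blk_append {p q r s : ℕ}
    (A : Matrix (Fin p) (Fin r) R) (B : Matrix (Fin p) (Fin s) R)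
    (C : Matrix (Fin q) (Fin r) R) (D : Matrix (Fin q) (Fin s) R)
    (x : Fin r → X) (y : Fin s → X) :
    mulVecX (blk A B C D) (Fin.append x y)
      = Fin.append (mulVecX A x + mulVecX B y) (mulVecX C x + mulVecX D y) := by
  rw [blk, mulVecX_vcat, mulVecX_hcat_append, mulVecX_hcat_append]

lemma hcat_decomp {p q r : ℕ} (A : Matrix (Fin p) (Fin (q + r)) R) :
    hcat (A.submatrix id (Fin.castAdd r)) (A.submatrix id (Fin.natAdd q)) = A := by
  ext i j
  refine Fin.addCases (fun j' => ?_) (fun j' => ?_) j <;> simp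

lemma vcat_decomp {p q r : ℕ} (A : Matrix (Fin (p + q)) (Fin r) R) :
    vcat (A.submatrix (Fin.castAdd q) id) (A.submatrix (Fin.natAdd p) id) = A := by
  ext i j
  refine Fin.addCases (fun i' => ?_) (fun i' => ?_) i <;> simp

lemma append_fst {p q : ℕ} {M : Type*} {u w : Fin p → M} {v z : Fin q → M}
    (h : Fin.append u v = Fin.append w z) : u = w := by
  funext i
  have := congrFun h (Fin.castAdd q i)
  simpa using this

lemma append_snd {p q : ℕ} {M : Type*} {u w : Fin p → M} {v z : Fin q → M}
    (h : Fin.append u v = Fin.append w z) : v = z := by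
  funext i
  have := congrFun h (Fin.natAdd p i)
  simpa using this

lemma vcat_fst {p q r : ℕ} {A A' : Matrix (Fin p) (Fin r) R} {B B' : Matrix (Fin q) (Fin r) R}
    (h : vcat A B = vcat A' B') : A = A' := by
  ext i j
  have := congrFun (congrFun h (Fin.castAdd q i)) j
  simpa using this

lemma hcat_fst {p q r : ℕ} {A A' : Matrix (Fin p) (Fin q) R} {B B' : Matrix (Fin p) (Fin r) R}
    (h : hcat A B = hcat A' B') : A = A' := by
  ext i j
  have := congrFun (congrFun h i) (Fin.castAdd r j)
  simpa using this

namespace Triple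

lemma ge_of_cong {t s : Triple R X} (h : t.Cong s) : t.Ge s := by
  obtain ⟨n, a, C, x⟩ := t
  obtain ⟨m, b, D, y⟩ := s
  obtain ⟨h, U₁, U₂, _, _, ha, hx, hC⟩ := h
  simp only at h; subst h
  simp only [Fin.cast_eq_self, submatrix_cast_self] at ha hx hC
  exact ⟨U₁, U₂, ha, hx, hC⟩

lemma ge_trans {t s r : Triple R X} (h1 : t.Ge s) (h2 : s.Ge r) : t.Ge r := by
  obtain ⟨A₁, A₂, ha, hx, hC⟩ := h1
  obtain ⟨B₁, B₂, ha', hx', hC'⟩ := h2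
  refine ⟨B₁ * A₁, B₂ * A₂, ?_, ?_, ?_⟩
  · rw [ha, ha', Matrix.vecMul_vecMul]
  · rw [hx', hx, mulVecX_mulVecX]
  · calc r.C * (B₁ * A₁) = (r.C * B₁) * A₁ := (Matrix.mul_assoc _ _ _).symm
      _ = (B₂ * s.C) * A₁ := by rw [hC']
      _ = B₂ * (s.C * A₁) := Matrix.mul_assoc _ _ _
      _ = B₂ * (A₂ * t.C) := by rw [hC]
      _ = B₂ * A₂ * t.C := (Matrix.mul_assoc _ _ _).symm

lemma le_iff_ge {t s : Triple R X} : t.Le s ↔ s.Ge t := by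
  constructor
  · rintro ⟨A₁, A₂, hx, ha, hC⟩
    exact ⟨A₂, A₁, ha, hx, hC⟩
  · rintro ⟨A₁, A₂, ha, hx, hC⟩
    exact ⟨A₂, A₁, hx, ha, hC⟩

lemma ge_add {t s t' s' : Triple R X} (h : t.Ge s) (h' : t'.Ge s') :
    (t.add t').Ge (s.add s') := by
  obtain ⟨A₁, A₂, ha, hx, hC⟩ := h
  obtain ⟨B₁, B₂, ha', hx', hC'⟩ := h'
  refine ⟨blk A₁ 0 0 B₁, blk A₂ 0 0 B₂, ?_, ?_, ?_⟩
  · show Fin.append t.a t'.a = (Fin.append s.a s'.a) ᵥ* _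
    rw [vecMul_append_blk]
    simp only [Matrix.vecMul_zero, add_zero, zero_add, ← ha, ← ha']
  · show Fin.append s.x s'.x = mulVecX _ (Fin.append t.x t'.x)
    rw [mulVecX_blk_append]
    simp only [mulVecX_zero, zero_mulVecX, add_zero, zero_add, ← hx, ← hx']
  · erw [Triple.add_C_eq, Triple.add_C_eq, blk_mul_blk, blk_mul_blk]
    simp only [Matrix.mul_zero, Matrix.zero_mul, add_zero, zero_add, hC, hC']
    rfl

lemma ge_moveA {p q : Triple R X} {k : ℕ} {E : Matrix (Fin k) (Fin k) R} {w : Fin k → X}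
    (h : p.Ge (q.add ⟨k, 0, E, w⟩)) : (p.add ⟨k, 0, E, w⟩).Ge q := by
  obtain ⟨A₁, A₂, ha, hx, hC⟩ := h
  set T₁ := A₁.submatrix (Fin.castAdd k) id with hT₁
  set B₁ := A₁.submatrix (Fin.natAdd q.n) id with hB₁
  set T₂ := A₂.submatrix (Fin.castAdd k) id with hT₂
  set B₂ := A₂.submatrix (Fin.natAdd q.n) id with hB₂
  erw [← vcat_decomp A₁, ← hT₁, ← hB₁] at ha hC
  erw [← vcat_decomp A₂, ← hT₂, ← hB₂] at hx hC
  -- extract component equations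
  have ha' : p.a = q.a ᵥ* T₁ := by
    erw [ha]
    show (Fin.append q.a (0 : Fin k → R)) ᵥ* _ = _
    erw [vecMul_append_vcat, Matrix.zero_vecMul, add_zero]
  have hx0 : Fin.append q.x w = Fin.append (mulVecX T₂ p.x) (mulVecX B₂ p.x) := by
    erw [← mulVecX_vcat]; exact hx
  have hx' : q.x = mulVecX T₂ p.x := append_fst hx0
  have hC0 : vcat (q.C * T₁) (E * B₁) = vcat (T₂ * p.C) (B₂ * p.C) := by
    erw [← vcat_mul]
    erw [Triple.add_C_eq] at hC
    erw [← hC, blk_mul_vcat]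
    simp only [Matrix.zero_mul, add_zero, zero_add]
  have hC' : q.C * T₁ = T₂ * p.C := vcat_fst hC0
  refine ⟨hcat T₁ 0, hcat T₂ 0, ?_, ?_, ?_⟩
  · show Fin.append p.a (0 : Fin k → R) = _
    erw [vecMul_hcat, Matrix.vecMul_zero, ha']
  · show q.x = mulVecX _ (Fin.append p.x w)
    erw [mulVecX_hcat_append, zero_mulVecX, add_zero, hx']
  · erw [Triple.add_C_eq, mul_hcat, hcat_mul_blk]
    simp only [Matrix.mul_zero, Matrix.zero_mul, add_zero, zero_add, hC']
    rfl

lemma ge_moveX {p q : Triple R X} {k : ℕ} {u : Fin k → R} {F : Matrix (Fin k) (Fin k) R}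
    (h : (p.add ⟨k, u, F, 0⟩).Ge q) : p.Ge (q.add ⟨k, u, F, 0⟩) := by
  obtain ⟨A₁, A₂, ha, hx, hC⟩ := h
  set L₁ := A₁.submatrix id (Fin.castAdd k) with hL₁
  set R₁ := A₁.submatrix id (Fin.natAdd p.n) with hR₁
  set L₂ := A₂.submatrix id (Fin.castAdd k) with hL₂
  set R₂ := A₂.submatrix id (Fin.natAdd p.n) with hR₂
  erw [← hcat_decomp A₁, ← hL₁, ← hR₁] at ha hC
  erw [← hcat_decomp A₂, ← hL₂, ← hR₂] at hx hC
  have ha0 : Fin.append p.a u = Fin.append (q.a ᵥ* L₁) (q.a ᵥ* R₁) := by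
    erw [← vecMul_hcat]; exact ha
  have ha' : p.a = q.a ᵥ* L₁ := append_fst ha0
  have hx' : q.x = mulVecX L₂ p.x := by
    erw [hx]
    show mulVecX _ (Fin.append p.x (0 : Fin k → X)) = _
    erw [mulVecX_hcat_append, mulVecX_zero, add_zero]
  have hC0 : hcat (q.C * L₁) (q.C * R₁) = hcat (L₂ * p.C) (R₂ * F) := by
    erw [← mul_hcat, hC, Triple.add_C_eq, hcat_mul_blk]
    simp only [Matrix.mul_zero, Matrix.zero_mul, add_zero, zero_add]
  have hC' : q.C * L₁ = L₂ * p.C := hcat_fst hC0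
  refine ⟨vcat L₁ 0, vcat L₂ 0, ?_, ?_, ?_⟩
  · show p.a = (Fin.append q.a u) ᵥ* _
    erw [vecMul_append_vcat, Matrix.vecMul_zero, add_zero, ha']
  · show Fin.append q.x (0 : Fin k → X) = mulVecX _ p.x
    erw [mulVecX_vcat, zero_mulVecX, hx']
  · erw [Triple.add_C_eq, blk_mul_vcat, vcat_mul]
    simp only [Matrix.mul_zero, Matrix.zero_mul, add_zero, zero_add, hC']
    rfl

end Triple
end Infra4
section Infra5
variable [Ring R] [AddCommGroup X] [Module R X]
namespace Triple

lemma cong_add {t t' s s' : Triple R X} (h : t.Cong t') (h' : s.Cong s') :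
    (t.add s).Cong (t'.add s') := by
  obtain ⟨n, a, C, x⟩ := t
  obtain ⟨n', a', C', x'⟩ := t'
  obtain ⟨m, b, D, y⟩ := s
  obtain ⟨m', b', D', y'⟩ := s'
  obtain ⟨h1, U₁, U₂, hU₁, hU₂, ha, hx, hC⟩ := h
  obtain ⟨h2, V₁, V₂, hV₁, hV₂, hb, hy, hD⟩ := h'
  simp only at h1 h2; subst h1; subst h2
  simp only [Fin.cast_eq_self, submatrix_cast_self] at ha hx hC hb hy hD
  have ha : a = a' ᵥ* U₁ := ha
  have hx : x' = mulVecX U₂ x := hx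
  have hb : b = b' ᵥ* V₁ := hb
  have hy : y' = mulVecX V₂ y := hy
  refine ⟨rfl, blk U₁ 0 0 V₁, blk U₂ 0 0 V₂, blk_isUnit hU₁ hV₁, blk_isUnit hU₂ hV₂,
    ?_, ?_, ?_⟩
  · show Fin.append a b = (Fin.append a' b') ᵥ* _
    rw [vecMul_append_blk, Matrix.vecMul_zero, Matrix.vecMul_zero, add_zero, zero_add,
      ← ha, ← hb]
  · show Fin.append x' y' = mulVecX _ (Fin.append x y)
    rw [mulVecX_blk_append, zero_mulVecX, zero_mulVecX, add_zero, zero_add, ← hx, ← hy]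
  · show (Triple.add ⟨n, a', C', x'⟩ ⟨m, b', D', y'⟩).C.submatrix _ _ * _ = _
    erw [submatrix_cast_self, Triple.add_C_eq, Triple.add_C_eq, blk_mul_blk, blk_mul_blk]
    simp only [Matrix.mul_zero, Matrix.zero_mul, add_zero, zero_add, hC, hD]
    rfl

lemma cong_comm (t s : Triple R X) : (t.add s).Cong (s.add t) := by
  refine cong_of_equiv (finSumFinEquiv.symm.trans ((Equiv.sumComm _ _).trans finSumFinEquiv))
    ?_ ?_ ?_
  · intro i
    refine Fin.addCases (fun i' => ?_) (fun i' => ?_) i <;> (unfold Triple.add; simp)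
  · intro i
    refine Fin.addCases (fun i' => ?_) (fun i' => ?_) i <;> (unfold Triple.add; simp)
  · intro i j
    refine Fin.addCases (fun i' => ?_) (fun i' => ?_) i <;>
      refine Fin.addCases (fun j' => ?_) (fun j' => ?_) j <;> (unfold Triple.add; simp)

lemma cong_assoc (t s w : Triple R X) : ((t.add s).add w).Cong (t.add (s.add w)) := by
  refine cong_of_equiv (finSumFinEquiv.symm.trans
    ((Equiv.sumCongr finSumFinEquiv.symm (Equiv.refl (Fin w.n))).trans
      ((Equiv.sumAssoc (Fin t.n) (Fin s.n) (Fin w.n)).trans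
        ((Equiv.sumCongr (Equiv.refl (Fin t.n)) finSumFinEquiv).trans finSumFinEquiv))))
    ?_ ?_ ?_
  · intro i
    refine Fin.addCases (fun i' => ?_) (fun i' => ?_) i
    · refine Fin.addCases (fun i'' => ?_) (fun i'' => ?_) i' <;> (unfold Triple.add; simp)
    · (unfold Triple.add; simp)
  · intro i
    refine Fin.addCases (fun i' => ?_) (fun i' => ?_) i
    · refine Fin.addCases (fun i'' => ?_) (fun i'' => ?_) i' <;> (unfold Triple.add; simp)
    · (unfold Triple.add; simp)
  · intro i j
    refine Fin.addCases (fun i' => ?_) (fun i' => ?_) i <;>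
    [refine Fin.addCases (fun i'' => ?_) (fun i'' => ?_) i'; skip] <;>
    refine Fin.addCases (fun j' => ?_) (fun j' => ?_) j <;>
    first
      | (refine Fin.addCases (fun j'' => ?_) (fun j'' => ?_) j' <;> (unfold Triple.add; simp))
      | (unfold Triple.add; simp)

end Triple
end Infra5
section Infra6
variable [Ring R] [AddCommGroup X] [Module R X] {S : MatSet R}

lemma mulVecX_neg {m n : ℕ} (A : Matrix (Fin m) (Fin n) R) (x : Fin n → X) :
    mulVecX (-A) x = -(mulVecX A x) := by
  funext i
  simp [mulVecX, neg_smul]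

lemma one_mem_matset (hS : IsMatMultSet S) (k : ℕ) : (1 : Matrix (Fin k) (Fin k) R) ∈ S k := by
  have := hS.1 k 1
  rwa [show (1 : Equiv.Perm (Fin k)) = Equiv.refl (Fin k) from rfl, _root_.permMatrix_refl] at this

namespace Triple

lemma add_C_mem (hS : IsMatMultSet S) {z z' : Triple R X} (h1 : z.C ∈ S z.n)
    (h2 : z'.C ∈ S z'.n) : (z.add z').C ∈ S (z.n + z'.n) :=
  hS.2.2 z.n z'.n z.C z'.C 0 h1 h2

def castAddZeroEquiv (n : ℕ) : Fin n ≃ Fin (n + 0) :=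
  ⟨Fin.castAdd 0, fun j => ⟨j.1, by omega⟩, fun i => Fin.ext (by simp), fun j => Fin.ext (by simp)⟩

def natAddZeroEquiv (n : ℕ) : Fin n ≃ Fin (0 + n) :=
  ⟨Fin.natAdd 0, fun j => ⟨j.1, by omega⟩, fun i => Fin.ext (by simp), fun j => Fin.ext (by simp)⟩

lemma cong_add_nil {t z : Triple R X} (hz : z.n = 0) : t.Cong (t.add z) := by
  obtain ⟨nz, az, Cz, xz⟩ := z
  simp only at hz; subst hz
  refine cong_of_equiv (castAddZeroEquiv t.n) ?_ ?_ ?_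
  · intro i
    exact (Triple.add_a_castAdd t ⟨0, az, Cz, xz⟩ i).symm
  · intro i
    exact (Triple.add_x_castAdd t ⟨0, az, Cz, xz⟩ i).symm
  · intro i j
    exact (Triple.add_C_cc t ⟨0, az, Cz, xz⟩ i j).symm

lemma cong_nil_add {t z : Triple R X} (hz : z.n = 0) : t.Cong (z.add t) := by
  obtain ⟨nz, az, Cz, xz⟩ := z
  simp only at hz; subst hz
  refine cong_of_equiv (natAddZeroEquiv t.n) ?_ ?_ ?_
  · intro i
    exact (Triple.add_a_natAdd ⟨0, az, Cz, xz⟩ t i).symm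
  · intro i
    exact (Triple.add_x_natAdd ⟨0, az, Cz, xz⟩ t i).symm
  · intro i j
    exact (Triple.add_C_nn ⟨0, az, Cz, xz⟩ t i j).symm

lemma cong_middle4 (p q r v : Triple R X) :
    ((p.add q).add (r.add v)).Cong ((p.add r).add (q.add v)) := by
  have h1 := cong_assoc p q (r.add v)
  have h2 : (q.add (r.add v)).Cong (r.add (q.add v)) := by
    have a1 := cong_symm (cong_assoc q r v)
    have a2 := cong_add (cong_comm q r) (cong_refl v)
    have a3 := cong_assoc r q v
    exact cong_trans (cong_trans a1 a2) a3
  have h3 := cong_add (cong_refl p) h2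
  have h4 := cong_symm (cong_assoc p r (q.add v))
  exact cong_trans (cong_trans h1 h3) h4

lemma trivial_decomp (hS : IsMatMultSet S) {z : Triple R X} (hz : IsTrivial (X := X) S z) :
    ∃ (k l : ℕ) (E : Matrix (Fin k) (Fin k) R) (w : Fin k → X) (u : Fin l → R)
      (F : Matrix (Fin l) (Fin l) R), E ∈ S k ∧ F ∈ S l ∧
        z.Cong (Triple.add ⟨k, 0, E, w⟩ ⟨l, u, F, 0⟩) := by
  induction hz with
  | zeroA n C x hC =>
      exact ⟨n, 0, C, x, 0, 1, hC, one_mem_matset hS 0, cong_add_nil rfl⟩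
  | zeroX n b C hC =>
      exact ⟨0, n, 1, 0, b, C, one_mem_matset hS 0, hC, cong_nil_add rfl⟩
  | add ht hs iht ihs =>
      obtain ⟨k₁, l₁, E₁, w₁, u₁, F₁, hE₁, hF₁, hc₁⟩ := iht
      obtain ⟨k₂, l₂, E₂, w₂, u₂, F₂, hE₂, hF₂, hc₂⟩ := ihs
      set zA₁ : Triple R X := ⟨k₁, 0, E₁, w₁⟩
      set zX₁ : Triple R X := ⟨l₁, u₁, F₁, 0⟩
      set zA₂ : Triple R X := ⟨k₂, 0, E₂, w₂⟩
      set zX₂ : Triple R X := ⟨l₂, u₂, F₂, 0⟩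
      have hcong := cong_trans (cong_add hc₁ hc₂)
        (cong_middle4 zA₁ zX₁ zA₂ zX₂)
      have hA : zA₁.add zA₂ = ⟨k₁ + k₂, 0, (zA₁.add zA₂).C, Fin.append w₁ w₂⟩ := by
        show Triple.mk _ (Fin.append 0 0) _ _ = _
        rw [append_zero_zero]
        rfl
      have hX : zX₁.add zX₂ = ⟨l₁ + l₂, Fin.append u₁ u₂, (zX₁.add zX₂).C, 0⟩ := by
        show Triple.mk _ _ _ (Fin.append 0 0) = _
        rw [append_zero_zero]
        rfl
      have m1 : (zA₁.add zA₂).C ∈ S (k₁ + k₂) := add_C_mem hS (z := zA₁) (z' := zA₂) hE₁ hE₂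
      have m2 : (zX₁.add zX₂).C ∈ S (l₁ + l₂) := add_C_mem hS (z := zX₁) (z' := zX₂) hF₁ hF₂
      refine ⟨k₁ + k₂, l₁ + l₂, (zA₁.add zA₂).C, Fin.append w₁ w₂, Fin.append u₁ u₂,
        (zX₁.add zX₂).C, m1, m2, ?_⟩
      rw [← hA, ← hX]
      exact hcong

lemma sim_symm {t s : Triple R X} (h : Sim S t s) : Sim S s t := by
  obtain ⟨z₁, z₂, h₁, h₂, hc⟩ := h
  exact ⟨z₂, z₁, h₂, h₁, cong_symm hc⟩

lemma sim_trans {t s r : Triple R X} (h1 : Sim S t s) (h2 : Sim S s r) : Sim S t r := by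
  obtain ⟨z₁, z₂, hz₁, hz₂, hc₁⟩ := h1
  obtain ⟨w₁, w₂, hw₁, hw₂, hc₂⟩ := h2
  refine ⟨z₁.add w₁, w₂.add z₂, IsTrivial.add hz₁ hw₁, IsTrivial.add hw₂ hz₂, ?_⟩
  have c1 : (t.add (z₁.add w₁)).Cong ((t.add z₁).add w₁) := cong_symm (cong_assoc _ _ _)
  have c2 : ((t.add z₁).add w₁).Cong ((s.add z₂).add w₁) := cong_add hc₁ (cong_refl _)
  have c3 : ((s.add z₂).add w₁).Cong ((s.add w₁).add z₂) := by
    have a1 := cong_assoc s z₂ w₁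
    have a2 := cong_add (cong_refl s) (cong_comm z₂ w₁)
    have a3 := cong_symm (cong_assoc s w₁ z₂)
    exact cong_trans (cong_trans a1 a2) a3
  have c4 : ((s.add w₁).add z₂).Cong ((r.add w₂).add z₂) := cong_add hc₂ (cong_refl _)
  have c5 : ((r.add w₂).add z₂).Cong (r.add (w₂.add z₂)) := cong_assoc _ _ _
  exact cong_trans (cong_trans (cong_trans (cong_trans c1 c2) c3) c4) c5

end Triple
end Infra6
section Infra7
variable [Ring R] [AddCommGroup X] [Module R X] {S : MatSet R}
namespace Triple

lemma eq_mk_of_a_eq_zero {z : Triple R X} (h : z.a = 0) : z = ⟨z.n, 0, z.C, z.x⟩ := by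
  obtain ⟨n, a, C, x⟩ := z
  simp only at h
  rw [h]

lemma eq_mk_of_x_eq_zero {z : Triple R X} (h : z.x = 0) : z = ⟨z.n, z.a, z.C, 0⟩ := by
  obtain ⟨n, a, C, x⟩ := z
  simp only at h
  rw [h]

lemma pad_ge {j j' : ℕ} :
    (Triple.Ge (R := R) (X := X) ⟨j, 0, 1, 0⟩ ⟨j', 0, 1, 0⟩) := by
  refine ⟨0, 0, ?_, ?_, ?_⟩
  · show (0 : Fin j → R) = (0 : Fin j' → R) ᵥ* 0
    rw [Matrix.vecMul_zero]
  · show (0 : Fin j' → X) = mulVecX 0 (0 : Fin j → X)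
    rw [zero_mulVecX]
  · show (1 : Matrix (Fin j') (Fin j') R) * 0 = 0 * (1 : Matrix (Fin j) (Fin j) R)
    simp

lemma cong_alpha {t s : Triple R X} (h : t.Ge s) :
    (Triple.add ⟨s.n, s.a, s.C, 0⟩ ⟨t.n, 0, t.C, t.x⟩).Cong
      (s.add ⟨t.n, -t.a, t.C, t.x⟩) := by
  obtain ⟨A₁, A₂, ha, hx, hC⟩ := h
  refine ⟨rfl, blk 1 A₁ 0 1, blk 1 A₂ 0 1, blk_triu_isUnit _, blk_triu_isUnit _, ?_, ?_, ?_⟩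
  · show Fin.append s.a (0 : Fin t.n → R) = (Fin.append s.a (-t.a)) ᵥ* blk 1 A₁ 0 1
    rw [vecMul_append_blk, Matrix.vecMul_one, Matrix.vecMul_one, Matrix.vecMul_zero,
      add_zero, ← ha]
    congr 1
    rw [← sub_eq_add_neg, sub_self]
  · show Fin.append s.x t.x = mulVecX (blk 1 A₂ 0 1) (Fin.append (0 : Fin s.n → X) t.x)
    rw [mulVecX_blk_append, mulVecX_one, mulVecX_one, zero_mulVecX, zero_add, ← hx]
    congr 1
    rw [zero_add]

  · show (Triple.add s ⟨t.n, -t.a, t.C, t.x⟩).C.submatrix _ _ * _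
      = _ * (Triple.add ⟨s.n, s.a, s.C, 0⟩ ⟨t.n, 0, t.C, t.x⟩).C
    erw [submatrix_cast_self, Triple.add_C_eq, blk_mul_blk, blk_mul_blk]
    simp [hC]

lemma cong_L1 (t : Triple R X) :
    (t.add ⟨t.n, -t.a, t.C, t.x⟩).Cong
      (Triple.add ⟨t.n, 0, t.C, t.x⟩ ⟨t.n, -t.a, t.C, 0⟩) := by
  refine ⟨rfl, blk 1 0 (-1) 1, blk 1 0 (-1) 1, blk_tril_isUnit _, blk_tril_isUnit _,
    ?_, ?_, ?_⟩
  · show Fin.append t.a (-t.a)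
      = (Fin.append (0 : Fin t.n → R) (-t.a)) ᵥ* blk 1 0 (-1) 1
    rw [vecMul_append_blk]
    simp [Matrix.vecMul_neg]
  · show Fin.append t.x (0 : Fin t.n → X)
      = mulVecX (blk 1 0 (-1) 1) (Fin.append t.x t.x)
    rw [mulVecX_blk_append]
    simp [mulVecX_neg, mulVecX_one, zero_mulVecX]
  · show (Triple.add ⟨t.n, 0, t.C, t.x⟩ ⟨t.n, -t.a, t.C, 0⟩).C.submatrix _ _ * _
      = _ * (t.add ⟨t.n, -t.a, t.C, t.x⟩).C
    erw [submatrix_cast_self, Triple.add_C_eq, blk_mul_blk, blk_mul_blk]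
    simp [Matrix.mul_neg, Matrix.neg_mul]

lemma ge_imp_sim (hS : IsMatMultSet S) {t s : Triple R X} (ht : t.C ∈ S t.n)
    (hs : s.C ∈ S s.n) (h : t.Ge s) : Sim S t s := by
  refine ⟨Triple.add ⟨s.n, s.a, s.C, 0⟩ ⟨t.n, 0, t.C, t.x⟩,
    Triple.add ⟨t.n, 0, t.C, t.x⟩ ⟨t.n, -t.a, t.C, 0⟩,
    IsTrivial.add (IsTrivial.zeroX _ _ _ hs) (IsTrivial.zeroA _ _ _ ht),
    IsTrivial.add (IsTrivial.zeroA _ _ _ ht) (IsTrivial.zeroX _ _ _ ht), ?_⟩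
  have c1 := cong_add (cong_refl t) (cong_alpha h)
  have c2 := cong_symm (cong_assoc t s ⟨t.n, -t.a, t.C, t.x⟩)
  have c3 := cong_add (cong_comm t s) (cong_refl (⟨t.n, -t.a, t.C, t.x⟩ : Triple R X))
  have c4 := cong_assoc s t (⟨t.n, -t.a, t.C, t.x⟩ : Triple R X)
  have c5 := cong_add (cong_refl s) (cong_L1 t)
  exact cong_trans (cong_trans (cong_trans (cong_trans c1 c2) c3) c4) c5

lemma le_imp_sim (hS : IsMatMultSet S) {t s : Triple R X} (ht : t.C ∈ S t.n)
    (hs : s.C ∈ S s.n) (h : t.Le s) : Sim S t s :=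
  sim_symm (ge_imp_sim hS hs ht (le_iff_ge.mp h))

end Triple
end Infra7

section Main
variable [Ring R] [AddCommGroup X] [Module R X] {S : MatSet R}
namespace Triple

lemma add_a_eq (t s : Triple R X) : (t.add s).a = Fin.append t.a s.a := rfl
lemma add_x_eq (t s : Triple R X) : (t.add s).x = Fin.append t.x s.x := rfl

lemma sim_imp_cond2 (hS : IsMatMultSet S) {t s : Triple R X} (h : Sim S t s) :
    ∃ (k : ℕ) (u : Fin k → R) (E F : Matrix (Fin k) (Fin k) R) (z : Fin k → X),
      E ∈ S k ∧ F ∈ S k ∧ (t.add ⟨k, 0, E, z⟩).Ge (s.add ⟨k, u, F, 0⟩) := by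
  obtain ⟨z₁, z₂, hz₁, hz₂, hc⟩ := h
  obtain ⟨k₁, l₁, E₁, w₁, u₁, F₁, hE₁, hF₁, hc₁⟩ := trivial_decomp hS hz₁
  obtain ⟨k₂, l₂, E₂, w₂, u₂, F₂, hE₂, hF₂, hc₂⟩ := trivial_decomp hS hz₂
  -- abbreviations
  have c1 : (t.add z₁).Cong
      ((t.add ⟨k₁, 0, E₁, w₁⟩).add ⟨l₁, u₁, F₁, 0⟩) :=
    cong_trans (cong_add (cong_refl t) hc₁)
      (cong_symm (cong_assoc t ⟨k₁, 0, E₁, w₁⟩ ⟨l₁, u₁, F₁, 0⟩))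
  have c2 : (s.add z₂).Cong
      ((s.add ⟨k₂, 0, E₂, w₂⟩).add ⟨l₂, u₂, F₂, 0⟩) :=
    cong_trans (cong_add (cong_refl s) hc₂)
      (cong_symm (cong_assoc s ⟨k₂, 0, E₂, w₂⟩ ⟨l₂, u₂, F₂, 0⟩))
  have G0 : ((t.add ⟨k₁, 0, E₁, w₁⟩).add ⟨l₁, u₁, F₁, 0⟩).Ge
      ((s.add ⟨k₂, 0, E₂, w₂⟩).add ⟨l₂, u₂, F₂, 0⟩) :=
    ge_trans (ge_of_cong (cong_symm c1)) (ge_trans (ge_of_cong hc) (ge_of_cong c2))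
  have c3 : ((s.add ⟨k₂, 0, E₂, w₂⟩).add ⟨l₂, u₂, F₂, 0⟩).Cong
      ((s.add ⟨l₂, u₂, F₂, 0⟩).add ⟨k₂, 0, E₂, w₂⟩) := by
    have a1 := cong_assoc s (⟨k₂, 0, E₂, w₂⟩ : Triple R X) ⟨l₂, u₂, F₂, 0⟩
    have a2 := cong_add (cong_refl s)
      (cong_comm (⟨k₂, 0, E₂, w₂⟩ : Triple R X) ⟨l₂, u₂, F₂, 0⟩)
    have a3 := cong_symm (cong_assoc s (⟨l₂, u₂, F₂, 0⟩ : Triple R X) ⟨k₂, 0, E₂, w₂⟩)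
    exact cong_trans (cong_trans a1 a2) a3
  have G1 := ge_trans G0 (ge_of_cong c3)
  have G2 : (((t.add ⟨k₁, 0, E₁, w₁⟩).add ⟨l₁, u₁, F₁, 0⟩).add ⟨k₂, 0, E₂, w₂⟩).Ge
      (s.add ⟨l₂, u₂, F₂, 0⟩) := ge_moveA G1
  have c4 : ((((t.add ⟨k₁, 0, E₁, w₁⟩).add ⟨l₁, u₁, F₁, 0⟩)).add ⟨k₂, 0, E₂, w₂⟩).Cong
      ((t.add ((⟨k₁, 0, E₁, w₁⟩ : Triple R X).add ⟨k₂, 0, E₂, w₂⟩)).add ⟨l₁, u₁, F₁, 0⟩) := by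
    have a1 := cong_assoc (t.add ⟨k₁, 0, E₁, w₁⟩) (⟨l₁, u₁, F₁, 0⟩ : Triple R X)
      ⟨k₂, 0, E₂, w₂⟩
    have a2 := cong_add (cong_refl (t.add ⟨k₁, 0, E₁, w₁⟩))
      (cong_comm (⟨l₁, u₁, F₁, 0⟩ : Triple R X) ⟨k₂, 0, E₂, w₂⟩)
    have a3 := cong_symm (cong_assoc (t.add ⟨k₁, 0, E₁, w₁⟩)
      (⟨k₂, 0, E₂, w₂⟩ : Triple R X) ⟨l₁, u₁, F₁, 0⟩)
    have a4 := cong_add (cong_assoc t (⟨k₁, 0, E₁, w₁⟩ : Triple R X) ⟨k₂, 0, E₂, w₂⟩)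
      (cong_refl (⟨l₁, u₁, F₁, 0⟩ : Triple R X))
    exact cong_trans (cong_trans (cong_trans a1 a2) a3) a4
  have G3 := ge_trans (ge_of_cong (cong_symm c4)) G2
  have G4 : (t.add ((⟨k₁, 0, E₁, w₁⟩ : Triple R X).add ⟨k₂, 0, E₂, w₂⟩)).Ge
      ((s.add ⟨l₂, u₂, F₂, 0⟩).add ⟨l₁, u₁, F₁, 0⟩) := ge_moveX G3
  have c5 := cong_assoc s (⟨l₂, u₂, F₂, 0⟩ : Triple R X) ⟨l₁, u₁, F₁, 0⟩
  have G5 := ge_trans G4 (ge_of_cong c5)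
  -- padding
  have G6 := ge_add G5 (pad_ge (R := R) (X := X) (j := l₂ + l₁) (j' := k₁ + k₂))
  have c6 := cong_assoc t ((⟨k₁, 0, E₁, w₁⟩ : Triple R X).add ⟨k₂, 0, E₂, w₂⟩)
    ⟨l₂ + l₁, 0, 1, 0⟩
  have c7 : ((s.add ((⟨l₂, u₂, F₂, 0⟩ : Triple R X).add ⟨l₁, u₁, F₁, 0⟩)).add
        ⟨k₁ + k₂, 0, 1, 0⟩).Cong
      (s.add ((⟨k₁ + k₂, 0, 1, 0⟩ : Triple R X).add
        ((⟨l₂, u₂, F₂, 0⟩ : Triple R X).add ⟨l₁, u₁, F₁, 0⟩))) := by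
    have a1 := cong_assoc s ((⟨l₂, u₂, F₂, 0⟩ : Triple R X).add ⟨l₁, u₁, F₁, 0⟩)
      ⟨k₁ + k₂, 0, 1, 0⟩
    have a2 := cong_add (cong_refl s)
      (cong_comm ((⟨l₂, u₂, F₂, 0⟩ : Triple R X).add ⟨l₁, u₁, F₁, 0⟩) ⟨k₁ + k₂, 0, 1, 0⟩)
    exact cong_trans a1 a2
  have G7 := ge_trans (ge_of_cong (cong_symm c6)) (ge_trans G6 (ge_of_cong c7))
  -- final triples
  set ZA : Triple R X :=
    ((⟨k₁, 0, E₁, w₁⟩ : Triple R X).add ⟨k₂, 0, E₂, w₂⟩).add ⟨l₂ + l₁, 0, 1, 0⟩ with hZAdef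
  set ZX : Triple R X :=
    (⟨k₁ + k₂, 0, 1, 0⟩ : Triple R X).add
      ((⟨l₂, u₂, F₂, 0⟩ : Triple R X).add ⟨l₁, u₁, F₁, 0⟩) with hZXdef
  have hZAa : ZA.a = 0 := by
    show Fin.append (Fin.append (0 : Fin k₁ → R) (0 : Fin k₂ → R)) (0 : Fin (l₂ + l₁) → R) = 0
    rw [append_zero_zero, append_zero_zero]
  have hZXx : ZX.x = 0 := by
    show Fin.append (0 : Fin (k₁ + k₂) → X)
      (Fin.append (0 : Fin l₂ → X) (0 : Fin l₁ → X)) = 0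
    rw [append_zero_zero, append_zero_zero]
  have hZA : ZA = (⟨(k₁ + k₂) + (l₂ + l₁), 0, ZA.C, ZA.x⟩ : Triple R X) :=
    eq_mk_of_a_eq_zero hZAa
  have hZX : ZX = (⟨(k₁ + k₂) + (l₂ + l₁), ZX.a, ZX.C, 0⟩ : Triple R X) :=
    eq_mk_of_x_eq_zero hZXx
  have mZA : ZA.C ∈ S ((k₁ + k₂) + (l₂ + l₁)) :=
    add_C_mem hS (z := (⟨k₁, 0, E₁, w₁⟩ : Triple R X).add ⟨k₂, 0, E₂, w₂⟩)
      (z' := ⟨l₂ + l₁, 0, 1, 0⟩)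
      (add_C_mem hS (z := ⟨k₁, 0, E₁, w₁⟩) (z' := ⟨k₂, 0, E₂, w₂⟩) hE₁ hE₂)
      (one_mem_matset hS (l₂ + l₁))
  have mZX : ZX.C ∈ S ((k₁ + k₂) + (l₂ + l₁)) :=
    add_C_mem hS (z := ⟨k₁ + k₂, 0, 1, 0⟩)
      (z' := (⟨l₂, u₂, F₂, 0⟩ : Triple R X).add ⟨l₁, u₁, F₁, 0⟩)
      (one_mem_matset hS (k₁ + k₂))
      (add_C_mem hS (z := ⟨l₂, u₂, F₂, 0⟩) (z' := ⟨l₁, u₁, F₁, 0⟩) hF₂ hF₁)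
  refine ⟨(k₁ + k₂) + (l₂ + l₁), ZX.a, ZA.C, ZX.C, ZA.x, mZA, mZX, ?_⟩
  rw [← hZA, ← hZX]
  exact G7

lemma cond2_imp_cond3 (hS : IsMatMultSet S) {t s : Triple R X} (ht : t.C ∈ S t.n)
    (hs : s.C ∈ S s.n)
    (h : ∃ (k : ℕ) (u : Fin k → R) (E F : Matrix (Fin k) (Fin k) R) (z : Fin k → X),
      E ∈ S k ∧ F ∈ S k ∧ (t.add ⟨k, 0, E, z⟩).Ge (s.add ⟨k, u, F, 0⟩)) :
    ∃ t₁ s₁ : Triple R X, t₁.C ∈ S t₁.n ∧ s₁.C ∈ S s₁.n ∧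
      t.Le t₁ ∧ t₁.Ge s₁ ∧ s₁.Le s := by
  obtain ⟨k, u, E, F, z, hE, hF, hGe⟩ := h
  refine ⟨t.add ⟨k, 0, E, z⟩, s.add ⟨k, u, F, 0⟩,
    add_C_mem hS ht hE, add_C_mem hS hs hF, ?_, hGe, ?_⟩
  · -- t ≤ t + (0,E,z)
    refine ⟨hcat 1 0, hcat 1 0, ?_, ?_, ?_⟩
    · erw [add_x_eq, mulVecX_hcat_append, mulVecX_one, zero_mulVecX, add_zero]
    · erw [add_a_eq, vecMul_hcat, Matrix.vecMul_one, Matrix.vecMul_zero]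
    · erw [Triple.add_C_eq, hcat_mul_blk, mul_hcat]
      simp
  · -- s + (u,F,0) ≤ s
    refine ⟨vcat 1 0, vcat 1 0, ?_, ?_, ?_⟩
    · erw [add_x_eq, mulVecX_vcat, mulVecX_one, zero_mulVecX]
    · erw [add_a_eq, vecMul_append_vcat, Matrix.vecMul_one, Matrix.vecMul_zero, add_zero]
    · erw [Triple.add_C_eq, blk_mul_vcat, vcat_mul]
      simp

lemma cond3_imp_sim (hS : IsMatMultSet S) {t s : Triple R X} (ht : t.C ∈ S t.n)
    (hs : s.C ∈ S s.n)
    (h : ∃ t₁ s₁ : Triple R X, t₁.C ∈ S t₁.n ∧ s₁.C ∈ S s₁.n ∧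
      t.Le t₁ ∧ t₁.Ge s₁ ∧ s₁.Le s) : Sim S t s := by
  obtain ⟨t₁, s₁, h1, h2, hle1, hge, hle2⟩ := h
  have sim1 : Sim S t t₁ := sim_symm (ge_imp_sim hS h1 ht (le_iff_ge.mp hle1))
  have sim2 : Sim S t₁ s₁ := ge_imp_sim hS h1 h2 hge
  have sim3 : Sim S s₁ s := sim_symm (ge_imp_sim hS hs h2 (le_iff_ge.mp hle2))
  exact sim_trans sim1 (sim_trans sim2 sim3)

end Triple
end Main


/-- The pseudo-Ore conditions determine the equivalence relation `∼`. -/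
theorem sim_characterization [Ring R] [AddCommGroup X] [Module R X] (S : MatSet R)
    (hS : IsMatMultSet S) (t s : Triple R X) (ht : t.C ∈ S t.n) (hs : s.C ∈ S s.n) :
    (Sim S t s ↔
      ∃ (k : ℕ) (u : Fin k → R) (E F : Matrix (Fin k) (Fin k) R) (z : Fin k → X),
        E ∈ S k ∧ F ∈ S k ∧ (t.add ⟨k, 0, E, z⟩).Ge (s.add ⟨k, u, F, 0⟩)) ∧
    (Sim S t s ↔
      ∃ t₁ s₁ : Triple R X, t₁.C ∈ S t₁.n ∧ s₁.C ∈ S s₁.n ∧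
        t.Le t₁ ∧ t₁.Ge s₁ ∧ s₁.Le s) := by
  constructor
  · constructor
    · exact fun h => Triple.sim_imp_cond2 hS h
    · exact fun h => Triple.cond3_imp_sim hS ht hs (Triple.cond2_imp_cond3 hS ht hs h)
  · constructor
    · exact fun h => Triple.cond2_imp_cond3 hS ht hs (Triple.sim_imp_cond2 hS h)
    · exact fun h => Triple.cond3_imp_sim hS ht hs h
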